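/- Let 1 ≤ i ≤ s and write ξ_i = (k,t). If (a,b) ∈ B_i^{(1.2)} of type (c) (i.e. (a,b) ∈ B_i, 1 < a < k, t < b < k, and (k,b) ∉ B_{i−1} or (a,t) ∉ B_{i−1}) and (b,c) ∈ B_i^{(1.1)}, then (a,c) ∈ B_i^{(1.1)}. -/

import Mathlib

open Finset MvPolynomial

namespace Panov

/-- The set `A` of places `(i,j)` with `n ≥ i > j ≥ 1`. -/
def placesA (n : ℕ) : Finset (ℕ × ℕ) :=
  (Finset.range (n + 1) ×ˢ Finset.range (n + 1)).filter fun p => 1 ≤ p.2 ∧ p.2 < p.1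

/-- The rank of a place in the linear order `≻`:
`η ≻ ζ` iff `ordA n η < ordA n ζ`. -/
def ordA (n : ℕ) (p : ℕ × ℕ) : ℕ := p.2 * (n + 1) + (n - p.1)

/-- The `≻`-greatest element of a (nonempty) set `B` of places:
the element with the minimal value of `ordA`. -/
def xiOf (n : ℕ) (B : Finset (ℕ × ℕ)) : ℕ × ℕ :=
  let m := WithTop.untopD 0 ((B.image (ordA n)).min)
  (n - m % (n + 1), m / (n + 1))

/-- The places that get the symbol `−` at the current step, when the
current set of unfilled places is `B`. -/
def minusSet (n : ℕ) (B : Finset (ℕ × ℕ)) : Finset (ℕ × ℕ) :=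
  B.filter fun p =>
    p.1 = (xiOf n B).1 ∧ (xiOf n B).2 < p.2 ∧ p.2 < (xiOf n B).1 ∧ (p.2, (xiOf n B).2) ∈ B

/-- The places that get the symbol `+` at the current step. -/
def plusSet (n : ℕ) (B : Finset (ℕ × ℕ)) : Finset (ℕ × ℕ) :=
  B.filter fun p =>
    p.2 = (xiOf n B).2 ∧ (xiOf n B).2 < p.1 ∧ p.1 < (xiOf n B).1 ∧ ((xiOf n B).1, p.1) ∈ B

/-- `Bset n M i` is the set of places unfilled after step `i` of the diagram. -/
def Bset (n : ℕ) (M : Finset (ℕ × ℕ)) : ℕ → Finset (ℕ × ℕ)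
  | 0 => placesA n \ M
  | i + 1 =>
      Bset n M i \
        insert (xiOf n (Bset n M i)) (minusSet n (Bset n M i) ∪ plusSet n (Bset n M i))

/-- `ξ_i`, the place that receives `⊗` at step `i ≥ 1`. -/
def xiStep (n : ℕ) (M : Finset (ℕ × ℕ)) (i : ℕ) : ℕ × ℕ := xiOf n (Bset n M (i - 1))

/-- `C_i⁻`, the places filled with `−` at step `i ≥ 1`. -/
def Cminus (n : ℕ) (M : Finset (ℕ × ℕ)) (i : ℕ) : Finset (ℕ × ℕ) :=
  minusSet n (Bset n M (i - 1))

/-- `C_i⁺`, the places filled with `+` at step `i ≥ 1`. -/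
def Cplus (n : ℕ) (M : Finset (ℕ × ℕ)) (i : ℕ) : Finset (ℕ × ℕ) :=
  plusSet n (Bset n M (i - 1))

/-- `M ⊆ A` spans an ideal `𝔪` of `𝔫 = ut(n,K)`. -/
def IsIdealSet (n : ℕ) (M : Finset (ℕ × ℕ)) : Prop :=
  M ⊆ placesA n ∧
    (∀ p ∈ M, ∀ d, 1 ≤ d → d < p.2 → (p.1, d) ∈ M) ∧
    (∀ p ∈ M, ∀ c, p.1 < c → c ≤ n → (c, p.2) ∈ M)

/-- `s` is the number of steps after which the diagram is complete. -/
def IsNumSteps (n : ℕ) (M : Finset (ℕ × ℕ)) (s : ℕ) : Prop :=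
  Bset n M s = ∅ ∧ ∀ j < s, (Bset n M j).Nonempty



/-- `(a,b) ∈ B_i^{(1.1)}` (relative to `ξ_i = (k,t)`):  `(a,b) ∈ B_i`,
`1 < a < k`, `t < b < k`, and both `(a,t)` and `(k,b)` lie in `B_{i−1}`. -/
def memB11 (n : ℕ) (M : Finset (ℕ × ℕ)) (i k t : ℕ) (q : ℕ × ℕ) : Prop :=
  q ∈ Bset n M i ∧ 1 < q.1 ∧ q.1 < k ∧ t < q.2 ∧ q.2 < k ∧
    (q.1, t) ∈ Bset n M (i - 1) ∧ (k, q.2) ∈ Bset n M (i - 1)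

/-- `(a,b) ∈ B_i^{(1.2)}` of type (c) (relative to `ξ_i = (k,t)`):
`(a,b) ∈ B_i`, `1 < a < k`, `t < b < k`, and `(a,t) ∉ B_{i−1}` or
`(k,b) ∉ B_{i−1}`. -/
def memB12c (n : ℕ) (M : Finset (ℕ × ℕ)) (i k t : ℕ) (q : ℕ × ℕ) : Prop :=
  q ∈ Bset n M i ∧ 1 < q.1 ∧ q.1 < k ∧ t < q.2 ∧ q.2 < k ∧
    ((q.1, t) ∉ Bset n M (i - 1) ∨ (k, q.2) ∉ Bset n M (i - 1))


lemma mem_placesA (n : ℕ) (p : ℕ × ℕ) : p ∈ placesA n ↔ p.1 ≤ n ∧ 1 ≤ p.2 ∧ p.2 < p.1 := by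
  simp only [placesA, Finset.mem_filter, Finset.mem_product, Finset.mem_range]
  omega

lemma Bset_subset_zero (n : ℕ) (M : Finset (ℕ × ℕ)) : ∀ j, Bset n M j ⊆ Bset n M 0 := by
  intro j
  induction j with
  | zero => exact subset_rfl
  | succ j ih => exact (Finset.sdiff_subset).trans ih

lemma Bset_subset_places (n : ℕ) (M : Finset (ℕ × ℕ)) (j : ℕ) :
    Bset n M j ⊆ placesA n :=
  (Bset_subset_zero n M j).trans (by simp [Bset, Finset.sdiff_subset])

lemma Bset_not_mem_M (n : ℕ) (M : Finset (ℕ × ℕ)) {j : ℕ} {p : ℕ × ℕ}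
    (hp : p ∈ Bset n M j) : p ∉ M := by
  have := Bset_subset_zero n M j hp
  simp only [Bset, Finset.mem_sdiff] at this
  exact this.2

lemma xiOf_mem {n : ℕ} {B : Finset (ℕ × ℕ)} (hB : B.Nonempty) (hsub : B ⊆ placesA n) :
    xiOf n B ∈ B := by
  have himg : (B.image (ordA n)).Nonempty := hB.image _
  have hmin : (B.image (ordA n)).min = ((B.image (ordA n)).min' himg : ℕ) :=
    (Finset.coe_min' himg).symm
  obtain ⟨q, hqB, hq⟩ := Finset.mem_image.mp (Finset.min'_mem _ himg)
  have hq1 : q.1 ≤ n := ((mem_placesA n q).mp (hsub hqB)).1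
  have hxi : xiOf n B = q := by
    unfold xiOf
    rw [hmin, ← hq]
    show (n - WithTop.untopD 0 (↑(ordA n q)) % (n + 1),
      WithTop.untopD 0 (↑(ordA n q)) / (n + 1)) = q
    have huntop : WithTop.untopD 0 ((ordA n q : ℕ) : WithTop ℕ) = ordA n q := rfl
    rw [huntop]
    unfold ordA
    have hr : n - q.1 < n + 1 := by omega
    rw [Nat.add_comm (q.2 * (n + 1)) (n - q.1), Nat.add_mul_mod_self_right,
      Nat.mod_eq_of_lt hr, Nat.add_mul_div_right _ _ (by omega : 0 < n + 1),
      Nat.div_eq_of_lt hr]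
    exact Prod.ext (by omega) (by simp)
  rw [hxi]; exact hqB

/-- The key "transitivity" invariant: if `(a,b)` and `(b,t)` are unfilled after
step `j`, and `(a,t) ∉ M`, then `(a,t)` is also unfilled after step `j`. -/
lemma key (n : ℕ) (M : Finset (ℕ × ℕ)) (hM : IsIdealSet n M) :
    ∀ j a b t, (a, b) ∈ Bset n M j → (b, t) ∈ Bset n M j → (a, t) ∉ M →
      (a, t) ∈ Bset n M j := by
  intro j
  induction j with
  | zero =>
    intro a b t hab hbt hat
    simp only [Bset, Finset.mem_sdiff] at hab hbt ⊢
    have h1 := (mem_placesA n (a, b)).mp hab.1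
    have h2 := (mem_placesA n (b, t)).mp hbt.1
    refine ⟨(mem_placesA n (a, t)).mpr ?_, hat⟩
    simp only at h1 h2 ⊢
    omega
  | succ j ih =>
    intro a b t hab hbt hat
    have hBsub : Bset n M j ⊆ placesA n := Bset_subset_places n M j
    simp only [Bset, Finset.mem_sdiff] at hab hbt ⊢
    have hab0 := hab.1
    have hbt0 := hbt.1
    have habP : a ≤ n ∧ 1 ≤ b ∧ b < a := (mem_placesA n (a, b)).mp (hBsub hab0)
    have hbtP : b ≤ n ∧ 1 ≤ t ∧ t < b := (mem_placesA n (b, t)).mp (hBsub hbt0)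
    have hatJ : (a, t) ∈ Bset n M j := ih a b t hab0 hbt0 hat
    refine ⟨hatJ, ?_⟩
    intro hmem
    have hne : (Bset n M j).Nonempty := ⟨_, hab0⟩
    have hxiB := xiOf_mem hne hBsub
    set ξ := xiOf n (Bset n M j) with hξdef
    have hxiP := (mem_placesA n ξ).mp (hBsub hxiB)
    have hxiM : ξ ∉ M := Bset_not_mem_M n M hxiB
    rcases Finset.mem_insert.mp hmem with heq | hmp
    · -- (a,t) = ξ : then (a,b) would be a minus place
      apply hab.2
      have hx1 : ξ.1 = a := by rw [← heq]
      have hx2 : ξ.2 = t := by rw [← heq]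
      refine Finset.mem_insert_of_mem (Finset.mem_union_left _ ?_)
      refine Finset.mem_filter.mpr ⟨hab0, hx1.symm, ?_, ?_, ?_⟩
      · show ξ.2 < b; omega
      · show b < ξ.1; omega
      · show (b, ξ.2) ∈ Bset n M j; rw [hx2]; exact hbt0
    · rcases Finset.mem_union.mp hmp with hm | hp
      · -- (a,t) is a minus place: a = ξ.1, ξ.2 < t < ξ.1, (t, ξ.2) ∈ B_j
        obtain ⟨-, ha1', ht1', ht2', hc'⟩ := Finset.mem_filter.mp hm
        have ha1 : a = ξ.1 := ha1'
        have ht1 : ξ.2 < t := ht1'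
        have ht2 : t < ξ.1 := ht2'
        have hc : (t, ξ.2) ∈ Bset n M j := hc'
        have hbM : (b, ξ.2) ∉ M := by
          intro hmem'
          exact hxiM (by
            have := hM.2.2 (b, ξ.2) hmem' ξ.1 (by omega) (by omega)
            simpa using this)
        have hbB : (b, ξ.2) ∈ Bset n M j := ih b t ξ.2 hbt0 hc hbM
        apply hab.2
        refine Finset.mem_insert_of_mem (Finset.mem_union_left _ ?_)
        exact Finset.mem_filter.mpr ⟨hab0, ha1, show ξ.2 < b by omega, show b < ξ.1 by omega, hbB⟩
      · -- (a,t) is a plus place: t = ξ.2, ξ.2 < a < ξ.1, (ξ.1, a) ∈ B_j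
        obtain ⟨-, ht1', ha1', ha2', hc'⟩ := Finset.mem_filter.mp hp
        have ht1 : t = ξ.2 := ht1'
        have ha1 : ξ.2 < a := ha1'
        have ha2 : a < ξ.1 := ha2'
        have hc : (ξ.1, a) ∈ Bset n M j := hc'
        have hkM : (ξ.1, b) ∉ M := by
          intro hmem'
          exact hxiM (by
            have := hM.2.1 (ξ.1, b) hmem' ξ.2 (by omega) (by omega)
            simpa using this)
        have hkB : (ξ.1, b) ∈ Bset n M j := ih ξ.1 a b hc hab0 hkM
        apply hbt.2
        refine Finset.mem_insert_of_mem (Finset.mem_union_right _ ?_)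
        exact Finset.mem_filter.mpr ⟨hbt0, ht1, show ξ.2 < b by omega, show b < ξ.1 by omega, hkB⟩

/-- **Case 6(ii).**  Writing `ξ_i = (k,t)`: if `(a,b) ∈ B_i^{(1.2)}` of type (c)
and `(b,c) ∈ B_i^{(1.1)}`, then `(a,c) ∈ B_i^{(1.1)}`. -/
theorem case6ii (K : Type*) [Field K] [CharZero K]
    (n s : ℕ) (hn : 2 ≤ n) (M : Finset (ℕ × ℕ))
    (hM : IsIdealSet n M) (hs : IsNumSteps n M s)
    (i k t : ℕ) (hi1 : 1 ≤ i) (his : i ≤ s)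
    (hkt : xiStep n M i = (k, t))
    (a b c : ℕ)
    (h1 : memB12c n M i k t (a, b))
    (h2 : memB11 n M i k t (b, c)) :
    memB11 n M i k t (a, c) := by
  obtain ⟨i', rfl⟩ : ∃ i', i = i' + 1 := ⟨i - 1, by omega⟩
  have hpred : i' + 1 - 1 = i' := rfl
  obtain ⟨hab, ha1, hak, htb, hbk, -⟩ := h1
  obtain ⟨hbc, hb1, hbk', htc, hck, hbt, hkc⟩ := h2
  -- ξ_i = (k,t) belongs to B_{i-1}
  have hne : (Bset n M i').Nonempty := hs.2 i' (by omega)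
  have hktB : (k, t) ∈ Bset n M i' := by
    have := xiOf_mem hne (Bset_subset_places n M i')
    rwa [show xiOf n (Bset n M i') = (k, t) from hkt] at this
  have hktM : (k, t) ∉ M := Bset_not_mem_M n M hktB
  have hkcM : (k, c) ∉ M := Bset_not_mem_M n M hkc
  have hkn : k ≤ n := ((mem_placesA n (k, t)).mp (Bset_subset_places n M i' hktB)).1
  -- B_{i} ⊆ B_{i-1}
  have hsub : Bset n M (i' + 1) ⊆ Bset n M i' := by
    simp only [Bset]; exact Finset.sdiff_subset
  -- (a,t) ∉ M and (a,c) ∉ M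
  have hatM : (a, t) ∉ M := fun h => hktM (by simpa using hM.2.2 (a, t) h k hak hkn)
  have hacM : (a, c) ∉ M := fun h => hkcM (by simpa using hM.2.2 (a, c) h k hak hkn)
  -- conclude via the key invariant
  have hatB : (a, t) ∈ Bset n M i' := key n M hM i' a b t (hsub hab) hbt hatM
  have hacB : (a, c) ∈ Bset n M (i' + 1) := key n M hM (i' + 1) a b c hab hbc hacM
  exact ⟨hacB, ha1, hak, htc, hck, hatB, hkc⟩
end Panov
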